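/- Let V = ℝ⁴ be symplectic with basis e₁, e₂, f₁, f₂ satisfying ω(eᵢ,fᵢ)=1, ω(e₁,e₂)=ω(f₁,f₂)=ω(e₁,f₂)=ω(e₂,f₁)=0. For a line l ⊂ V, let φ(l) denote the set of Lagrangian planes containing l, and for a Lagrangian L' with l ⊄ L' define c_l(L') := l + (l^⊥ ∩ L') ∈ φ(l). Let α, β ∈ ℝ with αβ ≠ 0 and set l₁ = span(e₁), l₂ = span(αe₁ + βf₁ + e₂), l₃ = span(f₁). Identify φ(l₁) with ℙ(span(e₂,f₂)) via L ↦ L ∩ span(e₂,f₂) (which is valid on the image of c_{l₁}). Then the composition c_{l₁} ∘ c_{l₃} ∘ c_{l₂} : φ(l₁) → φ(l₁) is, under this identification and in the basis (e₂, f₂), the projectivization of the unipotent matrix [[1, −1/(αβ)], [0, 1]]; in particular it is a nontrivial unipotent projective transformation. -/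

import Mathlib

/-- The standard symplectic form on ℝ⁴, as a bilinear map; coordinates 0,1,2,3
correspond to the symplectic basis e₁,e₂,f₁,f₂ (ω(eᵢ,fᵢ)=1, other pairings 0). -/
noncomputable def omB : (Fin 4 → ℝ) →ₗ[ℝ] (Fin 4 → ℝ) →ₗ[ℝ] ℝ :=
  LinearMap.mk₂ ℝ (fun u v => u 0 * v 2 - u 2 * v 0 + u 1 * v 3 - u 3 * v 1)
    (fun m₁ m₂ n => by simp only [Pi.add_apply]; ring)
    (fun c m n => by simp only [Pi.smul_apply, smul_eq_mul]; ring)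
    (fun m n₁ n₂ => by simp only [Pi.add_apply]; ring)
    (fun c m n => by simp only [Pi.smul_apply, smul_eq_mul]; ring)

/-- Symplectic orthogonal of a subspace. -/
noncomputable def symplPerp (l : Submodule ℝ (Fin 4 → ℝ)) : Submodule ℝ (Fin 4 → ℝ) :=
  ⨅ w ∈ l, LinearMap.ker (omB.flip w)

/-- The contraction map c_l : for a line l and a Lagrangian L' with l ⊄ L',
c_l(L') = l + (l^⊥ ∩ L') is the Lagrangian through l determined by L'. -/
noncomputable def contractTo (l L : Submodule ℝ (Fin 4 → ℝ)) : Submodule ℝ (Fin 4 → ℝ) :=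
  l ⊔ (symplPerp l ⊓ L)

lemma symplPerp_span_singleton (v : Fin 4 → ℝ) :
    symplPerp (Submodule.span ℝ {v}) = LinearMap.ker (omB.flip v) := by
  unfold symplPerp
  apply le_antisymm
  · exact iInf₂_le v (Submodule.mem_span_singleton_self v)
  · intro u hu
    simp only [Submodule.mem_iInf]
    intro w hw
    rw [Submodule.mem_span_singleton] at hw
    obtain ⟨c, rfl⟩ := hw
    simp only [LinearMap.mem_ker, map_smul, LinearMap.smul_apply] at hu ⊢
    rw [hu]; simp

lemma inf_span_pair (v a b : Fin 4 → ℝ) (h : omB a v ≠ 0 ∨ omB b v ≠ 0) :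
    LinearMap.ker (omB.flip v) ⊓ Submodule.span ℝ {a, b} =
      Submodule.span ℝ {omB b v • a - omB a v • b} := by
  apply le_antisymm
  · rintro u ⟨hk, hs⟩
    rw [SetLike.mem_coe, LinearMap.mem_ker, LinearMap.flip_apply] at hk
    rw [SetLike.mem_coe, Submodule.mem_span_pair] at hs
    obtain ⟨c, d, rfl⟩ := hs
    have hrel : c * omB a v + d * omB b v = 0 := by
      simpa [map_add, map_smul, LinearMap.add_apply, LinearMap.smul_apply,
        smul_eq_mul] using hk
    rw [Submodule.mem_span_singleton]
    rcases h with hA | hB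
    · refine ⟨-d / omB a v, ?_⟩
      rw [smul_sub, smul_smul, smul_smul]
      have h1 : -d / omB a v * omB b v = c := by field_simp; linarith
      have h2 : -d / omB a v * omB a v = -d := by field_simp
      rw [h1, h2, neg_smul, sub_neg_eq_add]
    · refine ⟨c / omB b v, ?_⟩
      rw [smul_sub, smul_smul, smul_smul]
      have h1 : c / omB b v * omB b v = c := by field_simp
      have h2 : c / omB b v * omB a v = -d := by field_simp; linarith
      rw [h1, h2, neg_smul, sub_neg_eq_add]
  · rw [Submodule.span_le, Set.singleton_subset_iff]
    refine ⟨?_, ?_⟩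
    · rw [SetLike.mem_coe, LinearMap.mem_ker, LinearMap.flip_apply]
      simp [map_sub, map_smul, LinearMap.sub_apply, LinearMap.smul_apply, smul_eq_mul]
      ring
    · rw [SetLike.mem_coe, Submodule.mem_span_pair]
      exact ⟨omB b v, -(omB a v), by rw [neg_smul, ← sub_eq_add_neg]⟩

lemma contract_pair (v a b : Fin 4 → ℝ) (h : omB a v ≠ 0 ∨ omB b v ≠ 0) :
    contractTo (Submodule.span ℝ {v}) (Submodule.span ℝ {a, b}) =
      Submodule.span ℝ {v, omB b v • a - omB a v • b} := by
  unfold contractTo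
  rw [symplPerp_span_singleton, inf_span_pair v a b h, ← Submodule.span_union,
    Set.singleton_union]

/-- With l₁ = span(e₁), l₂ = span(αe₁+βf₁+e₂), l₃ = span(f₁) (αβ ≠ 0), the
composition c_{l₁} ∘ c_{l₃} ∘ c_{l₂} on Lagrangians through l₁, identified with
ℙ(span(e₂,f₂)) via the coordinates (x,y), is the projectivization of the
nontrivial unipotent matrix [[1, −1/(αβ)],[0,1]] in the basis (e₂,f₂). -/
theorem three_contractions_give_unipotent (α β : ℝ) (hα : α ≠ 0) (hβ : β ≠ 0)
    (x y : ℝ) (hxy : ¬(x = 0 ∧ y = 0)) :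
    contractTo (Submodule.span ℝ {![(1 : ℝ), 0, 0, 0]})
      (contractTo (Submodule.span ℝ {![(0 : ℝ), 0, 1, 0]})
        (contractTo (Submodule.span ℝ {![α, 1, β, 0]})
          (Submodule.span ℝ
            {![(1 : ℝ), 0, 0, 0],
              x • ![(0 : ℝ), 1, 0, 0] + y • ![(0 : ℝ), 0, 0, 1]})))
    = Submodule.span ℝ
        {![(1 : ℝ), 0, 0, 0],
          (x - y / (α * β)) • ![(0 : ℝ), 1, 0, 0] + y • ![(0 : ℝ), 0, 0, 1]} := by
  have hb0 : x • ![(0 : ℝ), 1, 0, 0] + y • ![(0 : ℝ), 0, 0, 1] = ![0, x, 0, y] := by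
    funext i; fin_cases i <;> simp
  rw [hb0]
  -- step 1
  rw [contract_pair ![α, 1, β, 0] ![1,0,0,0] ![0,x,0,y] (Or.inl (by simp [omB]; exact hβ))]
  have h1 : omB ![0,x,0,y] ![α,1,β,0] • ![(1:ℝ),0,0,0] - omB ![1,0,0,0] ![α,1,β,0] • ![(0:ℝ),x,0,y]
      = ![-y, -(β*x), 0, -(β*y)] := by
    funext i; fin_cases i <;> simp [omB] <;> ring
  rw [h1]
  -- step 2
  rw [contract_pair ![0,0,1,0] ![α,1,β,0] ![-y, -(β*x), 0, -(β*y)] (Or.inl (by simp [omB]; exact hα))]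
  have h2 : omB ![-y, -(β*x), 0, -(β*y)] ![(0:ℝ),0,1,0] • ![α,1,β,0]
      - omB ![α,1,β,0] ![(0:ℝ),0,1,0] • ![-y, -(β*x), 0, -(β*y)]
      = ![0, α*β*x - y, -(y*β), α*β*y] := by
    funext i; fin_cases i <;> simp [omB] <;> ring
  rw [h2]
  -- step 3
  rw [contract_pair ![1,0,0,0] ![0,0,1,0] ![0, α*β*x - y, -(y*β), α*β*y] (Or.inl (by norm_num [omB]; exact one_ne_zero))]
  have h3 : omB ![0, α*β*x - y, -(y*β), α*β*y] ![(1:ℝ),0,0,0] • ![(0:ℝ),0,1,0]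
      - omB ![0,0,1,0] ![(1:ℝ),0,0,0] • ![0, α*β*x - y, -(y*β), α*β*y]
      = ![0, α*β*x - y, 0, α*β*y] := by
    funext i; fin_cases i <;> simp [omB] <;> ring
  rw [h3]
  -- final: second generators are proportional
  have hfin : ![(0:ℝ), α*β*x - y, 0, α*β*y] = (α*β) • ((x - y / (α * β)) • ![(0 : ℝ), 1, 0, 0] + y • ![(0 : ℝ), 0, 0, 1]) := by
    funext i; fin_cases i <;> simp <;> field_simp <;> ring
  rw [hfin, Set.pair_comm, ← Set.singleton_union, Submodule.span_union,
    Submodule.span_singleton_smul_eq (IsUnit.mk0 _ (mul_ne_zero hα hβ)) _,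
    ← Submodule.span_union, Set.singleton_union, Set.pair_comm]
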